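/- Let m be a positive integer, ε ≠ 1 an m-th root of unity in ℂ, D the m×m cyclic-shift permutation matrix, and U(r) the matrix with 1's in row r and 0 elsewhere. Then the vector v_ε = (ε, ε², …, ε^m) satisfies (D − I + U(r))·v_ε = (ε − 1)·v_ε; moreover the all-ones row vector (1,…,1) satisfies (1,…,1)·(D − I + U(r)) = (1,…,1). Hence the eigenvalues of D − I + U(r) are exactly {ε − 1 : ε^m = 1, ε ≠ 1} ∪ {1}. -/

import Mathlib

open Polynomial in
lemma eval_charpoly_aux {m : ℕ} (M : Matrix (Fin m) (Fin m) ℂ) (z : ℂ) :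
    M.charpoly.eval z = (z • (1 : Matrix (Fin m) (Fin m) ℂ) - M).det := by
  rw [Matrix.charpoly, ← Polynomial.coe_evalRingHom, RingHom.map_det]
  congr 1
  ext i j
  by_cases h : i = j <;>
    simp [h, Matrix.charmatrix_apply, Matrix.one_apply, Matrix.diagonal_apply]



/-- For the matrix `A = D − I + U(r)` over `ℂ` (`D` the m×m cyclic shift,
`U(r)` the matrix with `1`s in row `r`): for every m-th root of unity `ε ≠ 1`
the vector `(ε, ε², …, ε^m)` is an eigenvector with eigenvalue `ε − 1`;
the all-ones row vector satisfies `(1,…,1)·A = (1,…,1)`; and the set of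
eigenvalues of `A` is exactly `{ε − 1 : ε^m = 1, ε ≠ 1} ∪ {1}`. -/
theorem stmt_4 (m : ℕ) [NeZero m] (r : Fin m)
    (D : Matrix (Fin m) (Fin m) ℂ)
    (hD : D = Matrix.of fun i j => if j = i + 1 then 1 else 0)
    (U : Matrix (Fin m) (Fin m) ℂ)
    (hU : U = Matrix.of fun i _ => if i = r then 1 else 0) :
    (∀ ε : ℂ, ε ^ m = 1 → ε ≠ 1 →
        (D - 1 + U).mulVec (fun i => ε ^ ((i : ℕ) + 1))
          = (ε - 1) • fun i : Fin m => ε ^ ((i : ℕ) + 1)) ∧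
    (Matrix.vecMul (fun _ => (1 : ℂ)) (D - 1 + U) = fun _ => (1 : ℂ)) ∧
    spectrum ℂ (D - 1 + U)
      = {z : ℂ | ∃ ε : ℂ, ε ^ m = 1 ∧ ε ≠ 1 ∧ z = ε - 1} ∪ {1} := by
  have hm : 0 < m := Nat.pos_of_ne_zero (NeZero.ne m)
  -- Part 1
  have part1 : ∀ ε : ℂ, ε ^ m = 1 → ε ≠ 1 →
      (D - 1 + U).mulVec (fun i => ε ^ ((i : ℕ) + 1))
        = (ε - 1) • fun i : Fin m => ε ^ ((i : ℕ) + 1) := by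
    intro ε hεm hε1
    have hpow : ∀ k : ℕ, ε ^ (k % m) = ε ^ k := by
      intro k
      conv_rhs => rw [← Nat.div_add_mod k m, pow_add, pow_mul, hεm, one_pow, one_mul]
    have hsum : ∑ j : Fin m, ε ^ ((j : ℕ) + 1) = 0 := by
      have h := geom_sum_eq hε1 m
      have : ∑ j : Fin m, ε ^ ((j : ℕ) + 1) = ε * ∑ j ∈ Finset.range m, ε ^ j := by
        rw [Finset.mul_sum, ← Fin.sum_univ_eq_sum_range (fun j => ε * ε ^ j)]
        simp [pow_succ, mul_comm]
      rw [this, h, hεm]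
      simp
    funext i
    have hD1 : D.mulVec (fun i : Fin m => ε ^ ((i : ℕ) + 1)) i = ε ^ ((i : ℕ) + 1) * ε := by
      simp only [hD, Matrix.mulVec, dotProduct, Matrix.of_apply, ite_mul, one_mul,
        zero_mul, Finset.sum_ite_eq', Finset.mem_univ, if_true]
      have : ((i + 1 : Fin m) : ℕ) = ((i : ℕ) + 1) % m := by
        simp [Fin.add_def]
      rw [this, pow_succ, hpow]
    have hU1 : U.mulVec (fun i : Fin m => ε ^ ((i : ℕ) + 1)) i = 0 := by
      simp only [hU, Matrix.mulVec, dotProduct, Matrix.of_apply, ite_mul, one_mul,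
        zero_mul]
      by_cases h : i = r <;> simp [h, hsum]
    have expand : (D - 1 + U).mulVec (fun i : Fin m => ε ^ ((i : ℕ) + 1)) i
        = D.mulVec (fun i : Fin m => ε ^ ((i : ℕ) + 1)) i - ε ^ ((i : ℕ) + 1)
          + U.mulVec (fun i : Fin m => ε ^ ((i : ℕ) + 1)) i := by
      rw [Matrix.add_mulVec, Matrix.sub_mulVec, Matrix.one_mulVec]
      simp
    rw [expand, hD1, hU1]
    simp [Pi.smul_apply, smul_eq_mul]
    ring
  -- Part 2
  have part2 : Matrix.vecMul (fun _ => (1 : ℂ)) (D - 1 + U) = fun _ => (1 : ℂ) := by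
    funext j
    have hDcol : ∑ i : Fin m, D i j = 1 := by
      have key : ∀ i : Fin m, (j = i + 1) = (i = j - 1) := by
        intro i
        simp only [eq_iff_iff]
        constructor
        · rintro rfl; exact (add_sub_cancel_right i 1).symm
        · rintro rfl; exact (sub_add_cancel j 1).symm
      simp only [hD, Matrix.of_apply, key, Finset.sum_ite_eq', Finset.mem_univ, if_true]
    have hUcol : ∑ i : Fin m, U i j = 1 := by
      simp [hU]
    simp only [Matrix.vecMul, dotProduct, one_mul, Matrix.add_apply, Matrix.sub_apply,
      Matrix.one_apply, Finset.sum_add_distrib, Finset.sum_sub_distrib, hDcol, hUcol]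
    simp [Finset.sum_ite_eq, eq_comm]
  refine ⟨part1, part2, ?_⟩
  -- Part 3
  set A := D - 1 + U with hA
  obtain ⟨ζ, hζ⟩ : ∃ ζ : ℂ, IsPrimitiveRoot ζ m := ⟨_, Complex.isPrimitiveRoot_exp m (NeZero.ne m)⟩
  have hspec : ∀ z : ℂ, z ∈ spectrum ℂ A ↔ A.charpoly.IsRoot z := by
    intro z
    rw [spectrum.mem_iff, Matrix.isUnit_iff_isUnit_det, isUnit_iff_ne_zero, not_ne_iff,
      Polynomial.IsRoot, eval_charpoly_aux, Algebra.algebraMap_eq_smul_one]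
  -- membership of ε - 1 values
  have mem1 : ∀ ε : ℂ, ε ^ m = 1 → ε ≠ 1 → (ε - 1) ∈ spectrum ℂ A := by
    intro ε hεm hε1
    rw [spectrum.mem_iff]
    intro hiso
    obtain ⟨B, hB⟩ := hiso.exists_left_inv
    set v : Fin m → ℂ := fun i => ε ^ ((i : ℕ) + 1) with hv
    have hker : (algebraMap ℂ (Matrix (Fin m) (Fin m) ℂ) (ε - 1) - A).mulVec v = 0 := by
      rw [Matrix.sub_mulVec, part1 ε hεm hε1, Algebra.algebraMap_eq_smul_one,
        Matrix.smul_mulVec, Matrix.one_mulVec]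
      exact sub_self _
    have hv0 : v = 0 := by
      have := congrArg (B.mulVec) hker
      rwa [Matrix.mulVec_mulVec, hB, Matrix.one_mulVec, Matrix.mulVec_zero] at this
    have : v ⟨0, hm⟩ = 0 := by rw [hv0]; rfl
    have hε0 : ε ≠ 0 := by
      intro h; rw [h, zero_pow (NeZero.ne m)] at hεm; exact zero_ne_one hεm
    simp [hv] at this
    exact hε0 this
  have mem2 : (1 : ℂ) ∈ spectrum ℂ A := by
    rw [spectrum.mem_iff]
    intro hiso
    obtain ⟨B, hB⟩ := hiso.exists_right_inv
    have hker : Matrix.vecMul (fun _ => (1 : ℂ)) (algebraMap ℂ (Matrix (Fin m) (Fin m) ℂ) 1 - A)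
        = 0 := by
      rw [Matrix.vecMul_sub, part2, map_one, Matrix.vecMul_one]
      simp
    have : (fun _ => (1 : ℂ)) = (0 : Fin m → ℂ) := by
      have := congrArg (fun w => Matrix.vecMul w B) hker
      rwa [Matrix.vecMul_vecMul, hB, Matrix.vecMul_one, Matrix.zero_vecMul] at this
    have := congrFun this ⟨0, hm⟩
    simp at this
  -- counting
  have hmono : A.charpoly.Monic := Matrix.charpoly_monic A
  have hdeg : A.charpoly.natDegree = m := by
    simpa using Matrix.charpoly_natDegree_eq_dim A
  set Sf : Finset ℂ :=
    insert 1 (((Polynomial.nthRootsFinset m (1 : ℂ)).erase 1).image (fun ε => ε - 1)) with hSf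
  have h1notin : (1 : ℂ) ∉ ((Polynomial.nthRootsFinset m (1 : ℂ)).erase 1).image (fun ε => ε - 1) := by
    simp only [Finset.mem_image, Finset.mem_erase, not_exists]
    rintro ε ⟨⟨hε1, hεm⟩, h⟩
    rw [Polynomial.mem_nthRootsFinset hm] at hεm
    have : ε = 2 := by linear_combination h
    rw [this] at hεm
    have : ((2 ^ m : ℕ) : ℂ) = ((1 : ℕ) : ℂ) := by push_cast; simpa using hεm
    have := Nat.cast_injective this
    exact absurd this (Nat.one_lt_two_pow_iff.mpr (NeZero.ne m)).ne'
  have hinj : Function.Injective (fun ε : ℂ => ε - 1) := fun a b h => by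
    simpa using sub_left_injective h
  have hcardS : Sf.card = m := by
    rw [hSf, Finset.card_insert_of_notMem h1notin, Finset.card_image_of_injective _ hinj,
      Finset.card_erase_of_mem, hζ.card_nthRootsFinset]
    · omega
    · exact (Polynomial.mem_nthRootsFinset hm 1).2 (one_pow m)
  have hsubset : Sf ⊆ A.charpoly.roots.toFinset := by
    intro z hz
    rw [Multiset.mem_toFinset, Polynomial.mem_roots hmono.ne_zero]
    rw [hSf, Finset.mem_insert, Finset.mem_image] at hz
    rcases hz with rfl | ⟨ε, hε, rfl⟩
    · exact (hspec 1).mp mem2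
    · rw [Finset.mem_erase, Polynomial.mem_nthRootsFinset hm] at hε
      exact (hspec _).mp (mem1 ε hε.2 hε.1)
  have hcardroots : A.charpoly.roots.toFinset.card ≤ m := by
    calc A.charpoly.roots.toFinset.card ≤ Multiset.card A.charpoly.roots :=
          Multiset.toFinset_card_le _
      _ ≤ A.charpoly.natDegree := A.charpoly.card_roots' 
      _ = m := hdeg
  have heq : Sf = A.charpoly.roots.toFinset :=
    Finset.eq_of_subset_of_card_le hsubset (by omega)
  ext z
  rw [hspec z]
  have : A.charpoly.IsRoot z ↔ z ∈ A.charpoly.roots.toFinset := by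
    rw [Multiset.mem_toFinset, Polynomial.mem_roots hmono.ne_zero]
  rw [this, ← heq, hSf]
  simp only [Finset.mem_insert, Finset.mem_image, Finset.mem_erase,
    Polynomial.mem_nthRootsFinset hm, Set.mem_union, Set.mem_setOf_eq, Set.mem_singleton_iff]
  constructor
  · rintro (rfl | ⟨ε, ⟨hε1, hεm⟩, rfl⟩)
    · exact Or.inr rfl
    · exact Or.inl ⟨ε, hεm, hε1, rfl⟩
  · rintro (⟨ε, hεm, hε1, rfl⟩ | rfl)
    · exact Or.inr ⟨ε, ⟨hε1, hεm⟩, rfl⟩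
    · exact Or.inl rfl
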